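/- Let n ≥ 3 and let k ≥ 1 be an integer with 2k + 1 ≤ n − 1. For every κ ∈ Γ with κ_i > 0 for all i, one has Ñ_k(κ) − p_1(κ) · L̃_k(κ) ≤ 0. -/

import Mathlib

open Finset

variable {ι : Type*} [DecidableEq ι]

noncomputable def Ee (x : ι → ℝ) (k : ℕ) (A : Finset ι) : ℝ :=
  ∑ s ∈ A.powersetCard k, ∏ i ∈ s, x i

lemma Ee_zero (x : ι → ℝ) (A : Finset ι) : Ee x 0 A = 1 := by
  simp [Ee]

lemma Ee_one (x : ι → ℝ) (A : Finset ι) : Ee x 1 A = ∑ i ∈ A, x i := by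
  simp [Ee, powersetCard_one, Finset.sum_map]

lemma Ee_nonneg {x : ι → ℝ} {A : Finset ι} (hx : ∀ i ∈ A, 0 ≤ x i) (k : ℕ) :
    0 ≤ Ee x k A := by
  apply Finset.sum_nonneg
  intro s hs
  rw [mem_powersetCard] at hs
  exact Finset.prod_nonneg fun i hi => hx i (hs.1 hi)

lemma Ee_rec (x : ι → ℝ) (r : ℕ) {A : Finset ι} {a : ι} (ha : a ∈ A) :
    Ee x (r + 1) A = Ee x (r + 1) (A.erase a) + x a * Ee x r (A.erase a) := by
  conv_lhs => rw [← Finset.insert_erase ha]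
  rw [Ee, powersetCard_succ_insert (Finset.notMem_erase a A)]
  rw [Finset.sum_union]
  · congr 1
    rw [Finset.sum_image]
    · rw [show x a * Ee x r (A.erase a) = ∑ s ∈ powersetCard r (A.erase a), x a * ∏ i ∈ s, x i by rw [Ee, Finset.mul_sum]]
      apply Finset.sum_congr rfl
      intro s hs
      rw [mem_powersetCard] at hs
      have hanotin : a ∉ s := fun h => (Finset.notMem_erase a A) (hs.1 h)
      rw [Finset.prod_insert hanotin]
    · intro s hs t ht hst
      rw [Finset.mem_coe, mem_powersetCard] at hs ht
      have has : a ∉ s := fun h => (Finset.notMem_erase a A) (hs.1 h)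
      have hat : a ∉ t := fun h => (Finset.notMem_erase a A) (ht.1 h)
      have := congrArg (Finset.erase · a) hst
      simpa [Finset.erase_insert has, Finset.erase_insert hat] using this
  · rw [Finset.disjoint_left]
    intro s hs hs'
    rw [mem_powersetCard] at hs
    have has : a ∉ s := fun h => (Finset.notMem_erase a A) (hs.1 h)
    rw [Finset.mem_image] at hs'
    obtain ⟨t, ht, rfl⟩ := hs'
    exact has (Finset.mem_insert_self a t)

lemma Klem (x : ι → ℝ) : ∀ (A : Finset ι) (r : ℕ),
    ∑ a ∈ A, x a * Ee x r (A.erase a) = (r + 1 : ℝ) * Ee x (r + 1) A := by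
  intro A
  induction A using Finset.induction_on with
  | empty =>
    intro r
    rw [Finset.sum_empty]
    have h0 : Ee x (r+1) (∅ : Finset ι) = 0 := by
      unfold Ee
      rw [Finset.powersetCard_eq_empty.2 (by simp)]
      simp
    rw [h0]; ring
  | @insert a C ha ih =>
    intro r
    rw [Finset.sum_insert ha, Finset.erase_insert ha]
    have herase : ∀ j ∈ C, (insert a C).erase j = insert a (C.erase j) := by
      intro j hj
      rw [Finset.erase_insert_of_ne]
      intro h; exact ha (h ▸ hj)
    rw [Finset.sum_congr rfl (fun j hj => by rw [herase j hj])]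
    cases r with
    | zero =>
      simp only [Ee_zero, mul_one]
      rw [Ee_one, Finset.sum_insert ha]
      ring
    | succ r =>
      have step : ∀ j ∈ C, x j * Ee x (r + 1) (insert a (C.erase j)) =
          x j * Ee x (r + 1) (C.erase j) + x a * (x j * Ee x r (C.erase j)) := by
        intro j hj
        have haj : a ∈ insert a (C.erase j) := Finset.mem_insert_self a _
        have : (insert a (C.erase j)).erase a = C.erase j := by
          rw [Finset.erase_insert]
          intro h; exact ha (Finset.mem_of_mem_erase h)
        rw [Ee_rec x r haj, this]
        ring
      rw [Finset.sum_congr rfl step, Finset.sum_add_distrib, ← Finset.mul_sum, ih r, ih (r+1)]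
      rw [Ee_rec x (r+1) (Finset.mem_insert_self a C), Finset.erase_insert ha]
      push_cast
      ring

lemma K'lem (x : ι → ℝ) (A : Finset ι) (r : ℕ) :
    ∑ a ∈ A, Ee x r (A.erase a) = ((A.card : ℝ) - r) * Ee x r A := by
  cases r with
  | zero => simp [Ee_zero, Finset.sum_const]
  | succ r =>
    have step : ∀ a ∈ A, Ee x (r+1) (A.erase a) = Ee x (r+1) A - x a * Ee x r (A.erase a) := by
      intro a ha
      rw [Ee_rec x r ha]; ring
    rw [Finset.sum_congr rfl step, Finset.sum_sub_distrib, Finset.sum_const, Klem]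
    push_cast
    ring

lemma swap_sum (A : Finset ι) (g : ι → ι → ℝ) :
    ∑ a ∈ A, ∑ b ∈ A.erase a, g a b = ∑ a ∈ A, ∑ b ∈ A.erase a, g b a := by
  have h : ∀ (f : ι → ι → ℝ), ∑ a ∈ A, ∑ b ∈ A.erase a, f a b
      = ∑ a ∈ A, ∑ b ∈ A, if b ≠ a then f a b else 0 := by
    intro f
    refine Finset.sum_congr rfl fun a _ => ?_
    rw [← Finset.sum_filter, Finset.filter_ne']
  rw [h, h, Finset.sum_comm]
  refine Finset.sum_congr rfl fun a _ => Finset.sum_congr rfl fun b _ => ?_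
  exact if_congr ⟨Ne.symm, Ne.symm⟩ rfl rfl

lemma CC1 (x : ι → ℝ) (A : Finset ι) (s : ℕ) :
    ∑ a ∈ A, ∑ b ∈ A.erase a, x a * x b * Ee x s ((A.erase a).erase b)
      = (s+1 : ℝ) * (s+2) * Ee x (s+2) A := by
  have inner : ∀ a ∈ A, ∑ b ∈ A.erase a, x a * x b * Ee x s ((A.erase a).erase b)
      = x a * ((s+1 : ℝ) * Ee x (s+1) (A.erase a)) := by
    intro a _
    rw [← Klem x (A.erase a) s, Finset.mul_sum]
    exact Finset.sum_congr rfl fun b _ => by ring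
  rw [Finset.sum_congr rfl inner]
  have : ∑ a ∈ A, x a * ((s+1 : ℝ) * Ee x (s+1) (A.erase a))
      = (s+1 : ℝ) * ∑ a ∈ A, x a * Ee x (s+1) (A.erase a) := by
    rw [Finset.mul_sum]; exact Finset.sum_congr rfl fun a _ => by ring
  rw [this, Klem x A (s+1)]
  push_cast; ring

lemma CC0 (x : ι → ℝ) (A : Finset ι) (s : ℕ) :
    ∑ a ∈ A, ∑ b ∈ A.erase a, Ee x s ((A.erase a).erase b)
      = ((A.card : ℝ) - 1 - s) * ((A.card : ℝ) - s) * Ee x s A := by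
  have inner : ∀ a ∈ A, ∑ b ∈ A.erase a, Ee x s ((A.erase a).erase b)
      = ((A.card : ℝ) - 1 - s) * Ee x s (A.erase a) := by
    intro a ha
    rw [K'lem x (A.erase a) s, Finset.card_erase_of_mem ha]
    have h1 : (1 : ℕ) ≤ A.card := Finset.card_pos.2 ⟨a, ha⟩
    rw [Nat.cast_sub h1]
    push_cast; ring
  rw [Finset.sum_congr rfl inner, ← Finset.mul_sum, K'lem x A s]
  ring

lemma CCsq (x : ι → ℝ) (A : Finset ι) (s : ℕ) :
    ∑ a ∈ A, (x a)^2 * Ee x s (A.erase a)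
      = Ee x 1 A * Ee x (s+1) A - ((s:ℝ)+2) * Ee x (s+2) A := by
  have h : Ee x 1 A * Ee x (s+1) A = ∑ a ∈ A, x a * Ee x (s+1) A := by
    rw [Ee_one, Finset.sum_mul]
  have h2 : ∀ a ∈ A, x a * Ee x (s+1) A
      = x a * Ee x (s+1) (A.erase a) + (x a)^2 * Ee x s (A.erase a) := by
    intro a ha
    rw [Ee_rec x s ha]; ring
  rw [h, Finset.sum_congr rfl h2, Finset.sum_add_distrib, Klem x A (s+1)]
  push_cast; ring

lemma pair_mul_sum (x : ι → ℝ) (A : Finset ι) (s : ℕ) :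
    ∑ a ∈ A, ∑ b ∈ A.erase a, (x a * x b - 1) * Ee x s ((A.erase a).erase b)
      = ((s:ℝ)+1) * ((s:ℝ)+2) * Ee x (s+2) A
        - ((A.card : ℝ) - 1 - s) * ((A.card : ℝ) - s) * Ee x s A := by
  have expand : ∀ a ∈ A, ∀ b ∈ A.erase a,
      (x a * x b - 1) * Ee x s ((A.erase a).erase b)
      = x a * x b * Ee x s ((A.erase a).erase b) - Ee x s ((A.erase a).erase b) := by
    intro a _ b _; ring
  calc ∑ a ∈ A, ∑ b ∈ A.erase a, (x a * x b - 1) * Ee x s ((A.erase a).erase b)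
      = ∑ a ∈ A, ∑ b ∈ A.erase a, (x a * x b * Ee x s ((A.erase a).erase b)
          - Ee x s ((A.erase a).erase b)) := by
        exact Finset.sum_congr rfl fun a ha => Finset.sum_congr rfl fun b hb => expand a ha b hb
    _ = (∑ a ∈ A, ∑ b ∈ A.erase a, x a * x b * Ee x s ((A.erase a).erase b))
          - ∑ a ∈ A, ∑ b ∈ A.erase a, Ee x s ((A.erase a).erase b) := by
        rw [← Finset.sum_sub_distrib]
        exact Finset.sum_congr rfl fun a _ => by rw [Finset.sum_sub_distrib]
    _ = _ := by rw [CC1, CC0]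

lemma sq_diff_sum (x : ι → ℝ) (A : Finset ι) (s : ℕ) :
    ∑ a ∈ A, ∑ b ∈ A.erase a, (x a - x b)^2 * Ee x s ((A.erase a).erase b)
      = 2 * ((A.card : ℝ) - 1 - s) * (Ee x 1 A * Ee x (s+1) A - ((s:ℝ)+2) * Ee x (s+2) A)
        - 2 * ((s:ℝ)+1) * ((s:ℝ)+2) * Ee x (s+2) A := by
  have termA : ∑ a ∈ A, ∑ b ∈ A.erase a, (x a)^2 * Ee x s ((A.erase a).erase b)
      = ((A.card : ℝ) - 1 - s) * (Ee x 1 A * Ee x (s+1) A - ((s:ℝ)+2) * Ee x (s+2) A) := by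
    have inner : ∀ a ∈ A, ∑ b ∈ A.erase a, (x a)^2 * Ee x s ((A.erase a).erase b)
        = ((A.card : ℝ) - 1 - s) * ((x a)^2 * Ee x s (A.erase a)) := by
      intro a ha
      rw [← Finset.mul_sum, K'lem x (A.erase a) s, Finset.card_erase_of_mem ha]
      have h1 : (1 : ℕ) ≤ A.card := Finset.card_pos.2 ⟨a, ha⟩
      rw [Nat.cast_sub h1]
      push_cast; ring
    rw [Finset.sum_congr rfl inner, ← Finset.mul_sum, CCsq]
  have termB : ∑ a ∈ A, ∑ b ∈ A.erase a, (x b)^2 * Ee x s ((A.erase a).erase b)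
      = ((A.card : ℝ) - 1 - s) * (Ee x 1 A * Ee x (s+1) A - ((s:ℝ)+2) * Ee x (s+2) A) := by
    rw [← termA]
    rw [swap_sum A (fun a b => (x a)^2 * Ee x s ((A.erase a).erase b))]
    exact Finset.sum_congr rfl fun a _ => Finset.sum_congr rfl fun b _ => by
      rw [Finset.erase_right_comm]
  have expand : ∀ a ∈ A, ∀ b ∈ A.erase a,
      (x a - x b)^2 * Ee x s ((A.erase a).erase b)
      = (x a)^2 * Ee x s ((A.erase a).erase b) + (x b)^2 * Ee x s ((A.erase a).erase b)
        - 2 * (x a * x b * Ee x s ((A.erase a).erase b)) := by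
    intro a _ b _; ring
  calc ∑ a ∈ A, ∑ b ∈ A.erase a, (x a - x b)^2 * Ee x s ((A.erase a).erase b)
      = (∑ a ∈ A, ∑ b ∈ A.erase a, (x a)^2 * Ee x s ((A.erase a).erase b))
        + (∑ a ∈ A, ∑ b ∈ A.erase a, (x b)^2 * Ee x s ((A.erase a).erase b))
        - 2 * ∑ a ∈ A, ∑ b ∈ A.erase a, x a * x b * Ee x s ((A.erase a).erase b) := by
        rw [Finset.mul_sum, ← Finset.sum_add_distrib, ← Finset.sum_sub_distrib]
        refine Finset.sum_congr rfl fun a ha => ?_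
        rw [Finset.mul_sum, ← Finset.sum_add_distrib, ← Finset.sum_sub_distrib]
        exact Finset.sum_congr rfl fun b hb => expand a ha b hb
    _ = _ := by rw [termA, termB, CC1]; push_cast; ring

lemma chooseB3 (m s : ℕ) (h : 2 ≤ m) :
    m * (m-1) * ((m-2).choose s) = (s+1) * (s+2) * (m.choose (s+2)) := by
  obtain ⟨m', rfl⟩ : ∃ m', m = m' + 2 := ⟨m - 2, by omega⟩
  have e1 : m' + 2 - 1 = m' + 1 := by omega
  have e2 : m' + 2 - 2 = m' := by omega
  rw [e1, e2]
  have h1 := Nat.add_one_mul_choose_eq m' s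
  have h2 := Nat.add_one_mul_choose_eq (m'+1) (s+1)
  calc (m'+2) * (m'+1) * (m'.choose s) = (m'+2) * ((m'+1) * (m'.choose s)) := by ring
    _ = (m'+2) * ((m'+1).choose (s+1) * (s+1)) := by rw [h1]
    _ = (s+1) * ((m'+1+1) * ((m'+1).choose (s+1))) := by ring
    _ = (s+1) * ((m'+1+1).choose (s+1+1) * (s+1+1)) := by rw [h2]
    _ = (s+1) * (s+2) * ((m'+2).choose (s+2)) := by ring

lemma chooseB4 (m s : ℕ) (h : 2 ≤ m) :
    m * (m-1) * ((m-2).choose s) = (m-s) * (m-s-1) * (m.choose s) := by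
  obtain ⟨m', rfl⟩ : ∃ m', m = m' + 2 := ⟨m - 2, by omega⟩
  have e1 : m' + 2 - 1 = m' + 1 := by omega
  have e2 : m' + 2 - 2 = m' := by omega
  rw [e1, e2]
  have h1 := Nat.choose_mul_succ_eq m' s
  have h2 := Nat.choose_mul_succ_eq (m'+1) s
  have e3 : m' + 2 - s - 1 = m' + 1 - s := by omega
  rw [e3]
  calc (m'+2) * (m'+1) * (m'.choose s) = (m'+2) * ((m'.choose s) * (m'+1)) := by ring
    _ = (m'+2) * ((m'+1).choose s * (m'+1-s)) := by rw [h1]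
    _ = (m'+1-s) * ((m'+1).choose s * (m'+1+1)) := by ring
    _ = (m'+1-s) * ((m'+1+1).choose s * (m'+1+1-s)) := by rw [h2]
    _ = (m'+2-s) * (m'+1-s) * ((m'+2).choose s) := by
        have : m'+1+1-s = m'+2-s := by omega
        rw [this]; ring

lemma chooseB2 (m s : ℕ) (h : 2 ≤ m) :
    m * (m-1) * ((m-2).choose s) = (s+1) * (m-s-1) * (m.choose (s+1)) := by
  obtain ⟨m', rfl⟩ : ∃ m', m = m' + 2 := ⟨m - 2, by omega⟩
  have e1 : m' + 2 - 1 = m' + 1 := by omega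
  have e2 : m' + 2 - 2 = m' := by omega
  rw [e1, e2]
  have h1 := Nat.add_one_mul_choose_eq m' s
  have h2 := Nat.choose_mul_succ_eq (m'+1) (s+1)
  have e3 : m' + 2 - s - 1 = m' + 1 - s := by omega
  rw [e3]
  calc (m'+2) * (m'+1) * (m'.choose s) = (m'+2) * ((m'+1) * (m'.choose s)) := by ring
    _ = (m'+2) * ((m'+1).choose (s+1) * (s+1)) := by rw [h1]
    _ = (s+1) * ((m'+1).choose (s+1) * (m'+1+1)) := by ring
    _ = (s+1) * ((m'+1+1).choose (s+1) * (m'+1+1-(s+1))) := by rw [h2]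
    _ = (s+1) * (m'+1-s) * ((m'+2).choose (s+1)) := by
        have : m'+1+1-(s+1) = m'+1-s := by omega
        rw [this]; ring

noncomputable def Nn (x : ι → ℝ) (j : ℕ) (A : Finset ι) : ℝ :=
  ∑ i ∈ Finset.range (j+1), (-1:ℝ)^i * (j.choose i : ℝ) *
    (Ee x (2*j+1-2*i) A / (A.card.choose (2*j+1-2*i) : ℝ))

lemma Dnorm (x : ι → ℝ) (A : Finset ι) (s : ℕ) (h : s + 2 ≤ A.card) :
    ∑ a ∈ A, ∑ b ∈ A.erase a, (x a * x b - 1)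
        * (Ee x s ((A.erase a).erase b) / (((A.card - 2).choose s : ℕ) : ℝ))
      = (A.card : ℝ) * ((A.card : ℝ) - 1)
        * (Ee x (s+2) A / (A.card.choose (s+2) : ℝ) - Ee x s A / (A.card.choose s : ℝ)) := by
  have h2m : 2 ≤ A.card := by omega
  have hc0 : (0:ℝ) < (((A.card - 2).choose s : ℕ) : ℝ) := by
    exact_mod_cast Nat.choose_pos (by omega)
  have hcs2 : (0:ℝ) < ((A.card.choose (s+2) : ℕ) : ℝ) := by
    exact_mod_cast Nat.choose_pos (by omega)
  have hcs : (0:ℝ) < ((A.card.choose s : ℕ) : ℝ) := by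
    exact_mod_cast Nat.choose_pos (by omega)
  have hM : (0:ℝ) < (A.card : ℝ) := by exact_mod_cast (by omega : 0 < A.card)
  have hM1 : (0:ℝ) < (A.card : ℝ) - 1 := by
    have : (1:ℝ) < (A.card : ℝ) := by exact_mod_cast (by omega : 1 < A.card)
    linarith
  -- cast binomial identities
  have idB3 : (A.card : ℝ) * ((A.card : ℝ) - 1) * (((A.card - 2).choose s : ℕ) : ℝ)
      = ((s:ℝ)+1) * ((s:ℝ)+2) * ((A.card.choose (s+2) : ℕ) : ℝ) := by
    have := chooseB3 A.card s h2m
    have hcast := congrArg (fun t : ℕ => (t : ℝ)) this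
    push_cast [Nat.cast_sub (by omega : 1 ≤ A.card)] at hcast
    convert hcast using 2 <;> push_cast <;> ring
  have idB4 : (A.card : ℝ) * ((A.card : ℝ) - 1) * (((A.card - 2).choose s : ℕ) : ℝ)
      = ((A.card : ℝ) - s) * ((A.card : ℝ) - s - 1) * ((A.card.choose s : ℕ) : ℝ) := by
    have := chooseB4 A.card s h2m
    have hcast := congrArg (fun t : ℕ => (t : ℝ)) this
    push_cast [Nat.cast_sub (by omega : 1 ≤ A.card), Nat.cast_sub (by omega : s ≤ A.card),
      Nat.cast_sub (by omega : 1 ≤ A.card - s)] at hcast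
    convert hcast using 2 <;> push_cast [Nat.cast_sub (by omega : s ≤ A.card)] <;> ring
  -- pull the constant denominator out
  have pull : ∑ a ∈ A, ∑ b ∈ A.erase a, (x a * x b - 1)
        * (Ee x s ((A.erase a).erase b) / (((A.card - 2).choose s : ℕ) : ℝ))
      = (∑ a ∈ A, ∑ b ∈ A.erase a, (x a * x b - 1) * Ee x s ((A.erase a).erase b))
          / (((A.card - 2).choose s : ℕ) : ℝ) := by
    rw [Finset.sum_div]
    refine Finset.sum_congr rfl fun a _ => ?_
    rw [Finset.sum_div]
    exact Finset.sum_congr rfl fun b _ => by ring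
  rw [pull, pair_mul_sum]
  -- now pure algebra
  have hc2' : ((A.card.choose (s+2) : ℕ) : ℝ)
      = (A.card : ℝ) * ((A.card : ℝ) - 1) * (((A.card - 2).choose s : ℕ) : ℝ)
          / (((s:ℝ)+1) * ((s:ℝ)+2)) := by
    rw [idB3]; field_simp
  have hcs' : ((A.card.choose s : ℕ) : ℝ)
      = (A.card : ℝ) * ((A.card : ℝ) - 1) * (((A.card - 2).choose s : ℕ) : ℝ)
          / (((A.card : ℝ) - s) * ((A.card : ℝ) - s - 1)) := by
    rw [idB4]
    have hs1 : (0:ℝ) < (A.card : ℝ) - s := by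
      have : ((s:ℝ)) + 2 ≤ (A.card : ℝ) := by exact_mod_cast h
      linarith
    have hs2 : (0:ℝ) < (A.card : ℝ) - s - 1 := by
      have : ((s:ℝ)) + 2 ≤ (A.card : ℝ) := by exact_mod_cast h
      linarith
    field_simp
  rw [hc2', hcs']
  have hs1 : (0:ℝ) < (A.card : ℝ) - s := by
    have : ((s:ℝ)) + 2 ≤ (A.card : ℝ) := by exact_mod_cast h
    linarith
  have hs2 : (0:ℝ) < (A.card : ℝ) - s - 1 := by
    have : ((s:ℝ)) + 2 ≤ (A.card : ℝ) := by exact_mod_cast h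
    linarith
  have hMne : (A.card : ℝ) * ((A.card : ℝ) - 1) * (((A.card - 2).choose s : ℕ) : ℝ) ≠ 0 := mul_ne_zero (mul_ne_zero hM.ne' hM1.ne') hc0.ne'
  rw [div_div_eq_mul_div, div_div_eq_mul_div, ← sub_div, mul_div_assoc']
  rw [div_eq_div_iff hc0.ne' hMne]
  ring

lemma pascal_step (j : ℕ) (P : ℕ → ℝ) :
    ∑ i ∈ Finset.range (j+2), (-1:ℝ)^i * (((j+1).choose i : ℕ) : ℝ) * P (2*(j+1)+1-2*i)
      = ∑ i ∈ Finset.range (j+1), (-1:ℝ)^i * ((j.choose i : ℕ) : ℝ)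
          * (P (2*j+3-2*i) - P (2*j+1-2*i)) := by
  simp only [show 2*(j+1)+1 = 2*j+3 from by omega]
  have expand : ∀ i ∈ Finset.range (j+1),
      (-1:ℝ)^i * ((j.choose i : ℕ) : ℝ) * (P (2*j+3-2*i) - P (2*j+1-2*i))
      = (-1:ℝ)^i * ((j.choose i : ℕ) : ℝ) * P (2*j+3-2*i)
        - (-1:ℝ)^i * ((j.choose i : ℕ) : ℝ) * P (2*j+1-2*i) := fun i _ => by ring
  rw [Finset.sum_congr rfl expand, Finset.sum_sub_distrib]
  rw [Finset.sum_range_succ'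
    (fun i => (-1:ℝ)^i * (((j+1).choose i : ℕ) : ℝ) * P (2*j+3-2*i)) (j+1)]
  have shift : ∀ i ∈ Finset.range (j+1),
      (-1:ℝ)^(i+1) * (((j+1).choose (i+1) : ℕ) : ℝ) * P (2*j+3-2*(i+1))
      = -((-1:ℝ)^i * ((j.choose i : ℕ) : ℝ) * P (2*j+1-2*i))
        - (-1:ℝ)^i * ((j.choose (i+1) : ℕ) : ℝ) * P (2*j+1-2*i) := by
    intro i hi
    rw [Finset.mem_range] at hi
    have hidx : 2*j+3-2*(i+1) = 2*j+1-2*i := by omega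
    rw [hidx, Nat.choose_succ_succ]
    push_cast
    ring
  rw [Finset.sum_congr rfl shift, Finset.sum_sub_distrib]
  have sum1 : ∑ i ∈ Finset.range (j+1), (-1:ℝ)^i * ((j.choose i : ℕ) : ℝ) * P (2*j+3-2*i)
      = (∑ i ∈ Finset.range j,
          -((-1:ℝ)^i * ((j.choose (i+1) : ℕ) : ℝ) * P (2*j+1-2*i))) + P (2*j+3) := by
    rw [Finset.sum_range_succ'
      (fun i => (-1:ℝ)^i * ((j.choose i : ℕ) : ℝ) * P (2*j+3-2*i)) j]
    congr 1
    · refine Finset.sum_congr rfl fun i hi => ?_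
      rw [Finset.mem_range] at hi
      have hidx : 2*j+3-2*(i+1) = 2*j+1-2*i := by omega
      rw [hidx]
      push_cast
      ring
    · simp
  have sum2 : ∑ i ∈ Finset.range (j+1), (-1:ℝ)^i * ((j.choose (i+1) : ℕ) : ℝ) * P (2*j+1-2*i)
      = ∑ i ∈ Finset.range j, (-1:ℝ)^i * ((j.choose (i+1) : ℕ) : ℝ) * P (2*j+1-2*i) := by
    rw [Finset.sum_range_succ]
    simp [Nat.choose_succ_self]
  rw [sum1, sum2]
  have h0 : (-1:ℝ)^0 * (((j+1).choose 0 : ℕ) : ℝ) * P (2*j+3-2*0) = P (2*j+3) := by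
    simp only [pow_zero, Nat.choose_zero_right, Nat.cast_one, one_mul, mul_zero, Nat.sub_zero]
  have sumneg : ∑ i ∈ Finset.range (j+1),
      (-((-1:ℝ)^i * ((j.choose i : ℕ) : ℝ) * P (2*j+1-2*i))) 
      = -∑ i ∈ Finset.range (j+1), (-1:ℝ)^i * ((j.choose i : ℕ) : ℝ) * P (2*j+1-2*i) := by
    rw [Finset.sum_neg_distrib]
  rw [sumneg, h0, Finset.sum_neg_distrib]
  ring

lemma Nn_rec (x : ι → ℝ) (A : Finset ι) (j : ℕ) (h : 2*j+3 ≤ A.card) :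
    (A.card : ℝ) * ((A.card : ℝ) - 1) * Nn x (j+1) A
      = ∑ a ∈ A, ∑ b ∈ A.erase a, (x a * x b - 1) * Nn x j ((A.erase a).erase b) := by
  have hcard2 : ∀ a ∈ A, ∀ b ∈ A.erase a, ((A.erase a).erase b).card = A.card - 2 := by
    intro a ha b hb
    rw [Finset.card_erase_of_mem hb, Finset.card_erase_of_mem ha]
    omega
  -- rewrite RHS: expand Nn on the doubly-erased set and swap summations
  have rhs_eq : ∑ a ∈ A, ∑ b ∈ A.erase a, (x a * x b - 1) * Nn x j ((A.erase a).erase b)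
      = ∑ i ∈ Finset.range (j+1), (-1:ℝ)^i * ((j.choose i : ℕ) : ℝ) *
          ∑ a ∈ A, ∑ b ∈ A.erase a, (x a * x b - 1)
            * (Ee x (2*j+1-2*i) ((A.erase a).erase b)
                / (((A.card - 2).choose (2*j+1-2*i) : ℕ) : ℝ)) := by
    have step1 : ∀ a ∈ A, ∀ b ∈ A.erase a,
        (x a * x b - 1) * Nn x j ((A.erase a).erase b)
        = ∑ i ∈ Finset.range (j+1), (-1:ℝ)^i * ((j.choose i : ℕ) : ℝ) *
            ((x a * x b - 1) * (Ee x (2*j+1-2*i) ((A.erase a).erase b)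
              / (((A.card - 2).choose (2*j+1-2*i) : ℕ) : ℝ))) := by
      intro a ha b hb
      rw [Nn, hcard2 a ha b hb, Finset.mul_sum]
      exact Finset.sum_congr rfl fun i _ => by ring
    calc ∑ a ∈ A, ∑ b ∈ A.erase a, (x a * x b - 1) * Nn x j ((A.erase a).erase b)
        = ∑ a ∈ A, ∑ b ∈ A.erase a, ∑ i ∈ Finset.range (j+1),
            (-1:ℝ)^i * ((j.choose i : ℕ) : ℝ) *
            ((x a * x b - 1) * (Ee x (2*j+1-2*i) ((A.erase a).erase b)
              / (((A.card - 2).choose (2*j+1-2*i) : ℕ) : ℝ))) := by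
          exact Finset.sum_congr rfl fun a ha =>
            Finset.sum_congr rfl fun b hb => step1 a ha b hb
      _ = ∑ i ∈ Finset.range (j+1), ∑ a ∈ A, ∑ b ∈ A.erase a,
            (-1:ℝ)^i * ((j.choose i : ℕ) : ℝ) *
            ((x a * x b - 1) * (Ee x (2*j+1-2*i) ((A.erase a).erase b)
              / (((A.card - 2).choose (2*j+1-2*i) : ℕ) : ℝ))) := by
          rw [Finset.sum_comm]
          exact Finset.sum_congr rfl fun i _ => Finset.sum_comm
      _ = _ := by
          refine Finset.sum_congr rfl fun i _ => ?_
          rw [Finset.mul_sum]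
          refine Finset.sum_congr rfl fun a _ => ?_
          rw [Finset.mul_sum]
  rw [rhs_eq]
  have lhs_eq : (A.card : ℝ) * ((A.card : ℝ) - 1) * Nn x (j+1) A
      = ∑ i ∈ Finset.range (j+1), (-1:ℝ)^i * ((j.choose i : ℕ) : ℝ) *
          ((A.card : ℝ) * ((A.card : ℝ) - 1) *
            (Ee x (2*j+3-2*i) A / (A.card.choose (2*j+3-2*i) : ℝ)
              - Ee x (2*j+1-2*i) A / (A.card.choose (2*j+1-2*i) : ℝ))) := by
    rw [Nn, pascal_step j (fun r => Ee x r A / (A.card.choose r : ℝ)), Finset.mul_sum]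
    exact Finset.sum_congr rfl fun i _ => by ring
  rw [lhs_eq]
  refine Finset.sum_congr rfl fun i hi => ?_
  rw [Finset.mem_range] at hi
  congr 1
  have hs2 : (2*j+1-2*i) + 2 ≤ A.card := by omega
  have := Dnorm x A (2*j+1-2*i) hs2
  have hidx : (2*j+1-2*i) + 2 = 2*j+3-2*i := by omega
  rw [hidx] at this
  rw [this]

lemma Nn_nonneg (x : ι → ℝ) : ∀ (j : ℕ) (A : Finset ι), 2*j+1 ≤ A.card →
    (∀ i ∈ A, 0 < x i) → (∀ a ∈ A, ∀ b ∈ A, a ≠ b → 1 ≤ x a * x b) →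
    0 ≤ Nn x j A := by
  intro j
  induction j with
  | zero =>
    intro A hc hp _
    have hNn : Nn x 0 A = Ee x 1 A / (A.card.choose 1 : ℝ) := by
      rw [Nn]
      norm_num
    rw [hNn, Ee_one]
    apply div_nonneg
    · exact Finset.sum_nonneg fun i hi => (hp i hi).le
    · positivity
  | succ j ih =>
    intro A hc hp hg
    have h3 : 2*j+3 ≤ A.card := by omega
    have hM : (0:ℝ) < (A.card : ℝ) := by exact_mod_cast (by omega : 0 < A.card)
    have hM1 : (0:ℝ) < (A.card : ℝ) - 1 := by
      have : (1:ℝ) < (A.card : ℝ) := by exact_mod_cast (by omega : 1 < A.card)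
      linarith
    have hrec := Nn_rec x A j h3
    have hsum : 0 ≤ ∑ a ∈ A, ∑ b ∈ A.erase a, (x a * x b - 1) * Nn x j ((A.erase a).erase b) := by
      refine Finset.sum_nonneg fun a ha => Finset.sum_nonneg fun b hb => ?_
      have hbA : b ∈ A := Finset.mem_of_mem_erase hb
      have hab : b ≠ a := Finset.ne_of_mem_erase hb
      have h1 : 0 ≤ x a * x b - 1 := by
        have := hg a ha b hbA (Ne.symm hab)
        linarith
      have hcard : ((A.erase a).erase b).card = A.card - 2 := by
        rw [Finset.card_erase_of_mem hb, Finset.card_erase_of_mem ha]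
        omega
      have h2 : 0 ≤ Nn x j ((A.erase a).erase b) := by
        apply ih
        · rw [hcard]; omega
        · intro i hi
          exact hp i (Finset.mem_of_mem_erase (Finset.mem_of_mem_erase hi))
        · intro c hc' d hd' hcd
          exact hg c (Finset.mem_of_mem_erase (Finset.mem_of_mem_erase hc'))
            d (Finset.mem_of_mem_erase (Finset.mem_of_mem_erase hd')) hcd
      exact mul_nonneg h1 h2
    nlinarith [hrec, hsum, mul_pos hM hM1]

lemma per_term (x : ι → ℝ) (A : Finset ι) (s : ℕ) (h : s + 2 ≤ A.card) :
    Ee x (s+2) A / (A.card.choose (s+2) : ℝ)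
      - (Ee x 1 A / (A.card : ℝ)) * (Ee x (s+1) A / (A.card.choose (s+1) : ℝ))
    = -(((s:ℝ)+1) / (2 * (A.card : ℝ)^2 * ((A.card : ℝ) - 1)))
        * ∑ a ∈ A, ∑ b ∈ A.erase a, (x a - x b)^2
            * (Ee x s ((A.erase a).erase b) / (((A.card - 2).choose s : ℕ) : ℝ)) := by
  have h2m : 2 ≤ A.card := by omega
  have hc0 : (0:ℝ) < (((A.card - 2).choose s : ℕ) : ℝ) := by
    exact_mod_cast Nat.choose_pos (by omega)
  have hcs1 : (0:ℝ) < ((A.card.choose (s+1) : ℕ) : ℝ) := by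
    exact_mod_cast Nat.choose_pos (by omega)
  have hcs2 : (0:ℝ) < ((A.card.choose (s+2) : ℕ) : ℝ) := by
    exact_mod_cast Nat.choose_pos (by omega)
  have hM : (0:ℝ) < (A.card : ℝ) := by exact_mod_cast (by omega : 0 < A.card)
  have hM1 : (0:ℝ) < (A.card : ℝ) - 1 := by
    have : (1:ℝ) < (A.card : ℝ) := by exact_mod_cast (by omega : 1 < A.card)
    linarith
  have hMs1 : (0:ℝ) < (A.card : ℝ) - s - 1 := by
    have : ((s:ℝ)) + 2 ≤ (A.card : ℝ) := by exact_mod_cast h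
    linarith
  -- identity (a): M(M-1) c0 = (s+1)(M-s-1) c1
  have idA : (A.card : ℝ) * ((A.card : ℝ) - 1) * (((A.card - 2).choose s : ℕ) : ℝ)
      = ((s:ℝ)+1) * ((A.card : ℝ) - s - 1) * ((A.card.choose (s+1) : ℕ) : ℝ) := by
    have := chooseB2 A.card s h2m
    have hcast := congrArg (fun t : ℕ => (t : ℝ)) this
    push_cast [Nat.cast_sub (by omega : 1 ≤ A.card),
      Nat.cast_sub (by omega : 1 ≤ A.card - s), Nat.cast_sub (by omega : s ≤ A.card)] at hcast
    convert hcast using 2 <;> push_cast [Nat.cast_sub (by omega : s ≤ A.card)] <;> ring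
  -- identity (b): (s+2) c2 = (M-s-1) c1
  have idB : ((A.card.choose (s+2) : ℕ) : ℝ) * ((s:ℝ)+2)
      = ((A.card.choose (s+1) : ℕ) : ℝ) * ((A.card : ℝ) - s - 1) := by
    have := Nat.choose_succ_right_eq A.card (s+1)
    have hcast := congrArg (fun t : ℕ => (t : ℝ)) this
    push_cast [Nat.cast_sub (by omega : s+1 ≤ A.card)] at hcast
    convert hcast using 2 <;> push_cast <;> ring
  -- pull the constant denominator out and use sq_diff_sum
  have pull : ∑ a ∈ A, ∑ b ∈ A.erase a, (x a - x b)^2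
        * (Ee x s ((A.erase a).erase b) / (((A.card - 2).choose s : ℕ) : ℝ))
      = (∑ a ∈ A, ∑ b ∈ A.erase a, (x a - x b)^2 * Ee x s ((A.erase a).erase b))
          / (((A.card - 2).choose s : ℕ) : ℝ) := by
    rw [Finset.sum_div]
    refine Finset.sum_congr rfl fun a _ => ?_
    rw [Finset.sum_div]
    exact Finset.sum_congr rfl fun b _ => by ring
  rw [pull, sq_diff_sum]
  -- substitute c0 and c2 in terms of c1
  have hc0' : (((A.card - 2).choose s : ℕ) : ℝ)
      = ((s:ℝ)+1) * ((A.card : ℝ) - s - 1) * ((A.card.choose (s+1) : ℕ) : ℝ)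
          / ((A.card : ℝ) * ((A.card : ℝ) - 1)) := by
    rw [← idA]; field_simp
  have hc2' : ((A.card.choose (s+2) : ℕ) : ℝ)
      = ((A.card.choose (s+1) : ℕ) : ℝ) * ((A.card : ℝ) - s - 1) / ((s:ℝ)+2) := by
    have h2 : ((s:ℝ)+2) ≠ 0 := by positivity
    field_simp
    linarith [idB]
  rw [hc0', hc2']
  field_simp
  ring

lemma scal (c1 c2 sP kR M S sign : ℝ) (hM2 : M ≠ 0) (hM1 : M - 1 ≠ 0)
    (h : c1 * (sP + 1) = 2 * kR * c2) :
    sign * c1 * (-((sP + 1) / (2 * M^2 * (M - 1))) * S)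
      = -(kR / (M^2 * (M - 1))) * (sign * c2 * S) := by
  have lhs_eq : sign * c1 * (-((sP + 1) / (2 * M^2 * (M - 1))) * S)
      = -(c1 * (sP + 1)) * sign * S / (2 * M^2 * (M - 1)) := by ring
  rw [lhs_eq, h]
  field_simp


/-- The `k`-th elementary symmetric polynomial of `x : Fin m → ℝ`. -/
noncomputable def esymm {m : ℕ} (k : ℕ) (x : Fin m → ℝ) : ℝ :=
  ∑ s ∈ Finset.univ.powersetCard k, ∏ i ∈ s, x i

/-- The normalized `k`-th elementary symmetric function `p_k = σ_k / C(m,k)`. -/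
noncomputable def pnorm {m : ℕ} (k : ℕ) (x : Fin m → ℝ) : ℝ :=
  esymm k x / (m.choose k : ℝ)

/-- `L̃_k(λ) = Σ_{i=0}^k (−1)^i C(k,i) p_{2k−2i}(λ)`. -/
noncomputable def Ltilde {m : ℕ} (k : ℕ) (x : Fin m → ℝ) : ℝ :=
  ∑ i ∈ Finset.range (k + 1), (-1 : ℝ) ^ i * (k.choose i : ℝ) * pnorm (2 * k - 2 * i) x

/-- `Ñ_k(λ) = Σ_{i=0}^k (−1)^i C(k,i) p_{2k+1−2i}(λ)`. -/
noncomputable def Ntilde {m : ℕ} (k : ℕ) (x : Fin m → ℝ) : ℝ :=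
  ∑ i ∈ Finset.range (k + 1), (-1 : ℝ) ^ i * (k.choose i : ℝ) * pnorm (2 * k + 1 - 2 * i) x

/-- For `κ` in the cone `Γ = {λ : λ_i λ_j ≥ 1 for i ≠ j}` with positive entries,
`Ñ_k(κ) − p₁(κ) L̃_k(κ) ≤ 0`. -/
theorem Ntilde_sub_p1_mul_Ltilde_nonpos (n k : ℕ) (hn : 3 ≤ n) (hk : 1 ≤ k)
    (hkn : 2 * k + 1 ≤ n - 1) (κ : Fin (n - 1) → ℝ)
    (hΓ : ∀ i j : Fin (n - 1), i ≠ j → 1 ≤ κ i * κ j)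
    (hpos : ∀ i, 0 < κ i) :
    Ntilde k κ - pnorm 1 κ * Ltilde k κ ≤ 0 := by
  classical
  have hcard : (Finset.univ : Finset (Fin (n-1))).card = n - 1 := by simp
  have hbr : ∀ r : ℕ, pnorm r κ
      = Ee κ r (Finset.univ : Finset (Fin (n-1)))
          / (((Finset.univ : Finset (Fin (n-1))).card.choose r : ℕ) : ℝ) := by
    intro r
    simp only [pnorm, esymm, Ee, hcard]
  have key1 : Ntilde k κ - pnorm 1 κ * Ltilde k κ
      = ∑ i ∈ Finset.range (k+1), (-1:ℝ)^i * (k.choose i : ℝ)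
          * (pnorm (2*k+1-2*i) κ - pnorm 1 κ * pnorm (2*k-2*i) κ) := by
    rw [Ntilde, Ltilde, Finset.mul_sum, ← Finset.sum_sub_distrib]
    exact Finset.sum_congr rfl fun i _ => by ring
  have hlast : (-1:ℝ)^k * (k.choose k : ℝ)
      * (pnorm (2*k+1-2*k) κ - pnorm 1 κ * pnorm (2*k-2*k) κ) = 0 := by
    have e1 : 2*k+1-2*k = 1 := by omega
    have e2 : 2*k-2*k = 0 := by omega
    rw [e1, e2]
    have hp0 : pnorm 0 κ = 1 := by
      rw [pnorm]
      have : esymm 0 κ = 1 := by simp [esymm]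
      rw [this]
      simp
    rw [hp0]
    ring
  rw [key1, Finset.sum_range_succ, hlast, add_zero]
  -- abbreviations
  set M : ℝ := ((Finset.univ : Finset (Fin (n-1))).card : ℝ) with hM
  have hMval : M = ((n-1 : ℕ) : ℝ) := by rw [hM, hcard]
  have hMpos : (0:ℝ) < M := by rw [hMval]; exact_mod_cast (by omega : 0 < n - 1)
  have hM1pos : (0:ℝ) < M - 1 := by
    have : (1:ℝ) < M := by rw [hMval]; exact_mod_cast (by omega : 1 < n - 1)
    linarith
  have step : ∀ i ∈ Finset.range k,
      (-1:ℝ)^i * (k.choose i : ℝ)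
        * (pnorm (2*k+1-2*i) κ - pnorm 1 κ * pnorm (2*k-2*i) κ)
      = -((k:ℝ) / (M^2 * (M - 1)))
          * ((-1:ℝ)^i * (((k-1).choose i : ℕ) : ℝ)
            * ∑ a ∈ (Finset.univ : Finset (Fin (n-1))), ∑ b ∈ Finset.univ.erase a,
                (κ a - κ b)^2
                * (Ee κ (2*(k-1)+1-2*i) ((Finset.univ.erase a).erase b)
                    / ((((Finset.univ : Finset (Fin (n-1))).card - 2).choose
                        (2*(k-1)+1-2*i) : ℕ) : ℝ))) := by
    intro i hi
    rw [Finset.mem_range] at hi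
    have e1 : 2*k+1-2*i = (2*(k-1)+1-2*i) + 2 := by omega
    have e2 : 2*k-2*i = (2*(k-1)+1-2*i) + 1 := by omega
    rw [e1, e2, hbr, hbr, hbr]
    have hs : (2*(k-1)+1-2*i) + 2 ≤ (Finset.univ : Finset (Fin (n-1))).card := by
      rw [hcard]; omega
    have hch1 : (((Finset.univ : Finset (Fin (n-1))).card.choose 1 : ℕ) : ℝ) = M := by
      rw [Nat.choose_one_right, hM]
    rw [hch1, per_term κ Finset.univ (2*(k-1)+1-2*i) hs]
    -- scalar identity
    have hck : (k-1).choose i * k = k.choose i * (k - i) := by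
      have h := Nat.choose_mul_succ_eq (k-1) i
      have hk1 : k - 1 + 1 = k := by omega
      rw [hk1] at h
      exact h
    have e3 : (2*(k-1)+1-2*i) + 1 = 2*(k-i) := by omega
    have hnat : k.choose i * ((2*(k-1)+1-2*i) + 1) = 2*k*((k-1).choose i) := by
      rw [e3]
      calc k.choose i * (2*(k-i)) = 2*(k.choose i * (k-i)) := by ring
        _ = 2*((k-1).choose i * k) := by rw [← hck]
        _ = 2*k*((k-1).choose i) := by ring
    have hccR : (k.choose i : ℝ) * (((2*(k-1)+1-2*i) : ℕ) + 1 : ℝ)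
        = 2*(k:ℝ)*(((k-1).choose i : ℕ) : ℝ) := by
      exact_mod_cast congrArg (fun t : ℕ => (t : ℝ)) hnat
    exact scal _ _ _ _ M _ _ (ne_of_gt hMpos) (ne_of_gt hM1pos) hccR
  rw [Finset.sum_congr rfl step, ← Finset.mul_sum]
  -- now convert the remaining sum to Nn values
  have inner : ∀ a ∈ (Finset.univ : Finset (Fin (n-1))), ∀ b ∈ Finset.univ.erase a,
      (∑ i ∈ Finset.range k, (-1:ℝ)^i * (((k-1).choose i : ℕ) : ℝ)
        * ((κ a - κ b)^2
            * (Ee κ (2*(k-1)+1-2*i) ((Finset.univ.erase a).erase b)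
                / ((((Finset.univ : Finset (Fin (n-1))).card - 2).choose
                    (2*(k-1)+1-2*i) : ℕ) : ℝ))))
      = (κ a - κ b)^2 * Nn κ (k-1) ((Finset.univ.erase a).erase b) := by
    intro a ha b hb
    have hcardB : ((Finset.univ.erase a).erase b).card
        = (Finset.univ : Finset (Fin (n-1))).card - 2 := by
      rw [Finset.card_erase_of_mem hb, Finset.card_erase_of_mem ha]
      omega
    rw [Nn, hcardB, Finset.mul_sum]
    have hk1 : k - 1 + 1 = k := by omega
    rw [hk1]
    exact Finset.sum_congr rfl fun i _ => by ring
  have swap2 : ∑ i ∈ Finset.range k, (-1:ℝ)^i * (((k-1).choose i : ℕ) : ℝ)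
        * ∑ a ∈ (Finset.univ : Finset (Fin (n-1))), ∑ b ∈ Finset.univ.erase a,
            (κ a - κ b)^2
            * (Ee κ (2*(k-1)+1-2*i) ((Finset.univ.erase a).erase b)
                / ((((Finset.univ : Finset (Fin (n-1))).card - 2).choose
                    (2*(k-1)+1-2*i) : ℕ) : ℝ))
      = ∑ a ∈ (Finset.univ : Finset (Fin (n-1))), ∑ b ∈ Finset.univ.erase a,
          (κ a - κ b)^2 * Nn κ (k-1) ((Finset.univ.erase a).erase b) := by
    calc ∑ i ∈ Finset.range k, (-1:ℝ)^i * (((k-1).choose i : ℕ) : ℝ)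
        * ∑ a ∈ (Finset.univ : Finset (Fin (n-1))), ∑ b ∈ Finset.univ.erase a,
            (κ a - κ b)^2
            * (Ee κ (2*(k-1)+1-2*i) ((Finset.univ.erase a).erase b)
                / ((((Finset.univ : Finset (Fin (n-1))).card - 2).choose
                    (2*(k-1)+1-2*i) : ℕ) : ℝ))
        = ∑ i ∈ Finset.range k, ∑ a ∈ (Finset.univ : Finset (Fin (n-1))),
            ∑ b ∈ Finset.univ.erase a, (-1:ℝ)^i * (((k-1).choose i : ℕ) : ℝ)
            * ((κ a - κ b)^2
            * (Ee κ (2*(k-1)+1-2*i) ((Finset.univ.erase a).erase b)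
                / ((((Finset.univ : Finset (Fin (n-1))).card - 2).choose
                    (2*(k-1)+1-2*i) : ℕ) : ℝ))) := by
          refine Finset.sum_congr rfl fun i _ => ?_
          rw [Finset.mul_sum]
          refine Finset.sum_congr rfl fun a _ => ?_
          rw [Finset.mul_sum]
      _ = ∑ a ∈ (Finset.univ : Finset (Fin (n-1))), ∑ b ∈ Finset.univ.erase a,
            ∑ i ∈ Finset.range k, (-1:ℝ)^i * (((k-1).choose i : ℕ) : ℝ)
            * ((κ a - κ b)^2
            * (Ee κ (2*(k-1)+1-2*i) ((Finset.univ.erase a).erase b)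
                / ((((Finset.univ : Finset (Fin (n-1))).card - 2).choose
                    (2*(k-1)+1-2*i) : ℕ) : ℝ))) := by
          rw [Finset.sum_comm]
          exact Finset.sum_congr rfl fun a _ => Finset.sum_comm
      _ = _ := Finset.sum_congr rfl fun a ha =>
            Finset.sum_congr rfl fun b hb => inner a ha b hb
  rw [swap2]
  -- conclude by nonnegativity
  have hSnonneg : 0 ≤ ∑ a ∈ (Finset.univ : Finset (Fin (n-1))), ∑ b ∈ Finset.univ.erase a,
      (κ a - κ b)^2 * Nn κ (k-1) ((Finset.univ.erase a).erase b) := by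
    refine Finset.sum_nonneg fun a ha => Finset.sum_nonneg fun b hb => ?_
    refine mul_nonneg (sq_nonneg _) ?_
    apply Nn_nonneg
    · rw [Finset.card_erase_of_mem hb, Finset.card_erase_of_mem ha, hcard]
      omega
    · intro i _
      exact hpos i
    · intro c _ d _ hcd
      exact hΓ c d hcd
  have hcnonneg : 0 ≤ (k:ℝ) / (M^2 * (M-1)) := by positivity
  have := mul_nonneg hcnonneg hSnonneg
  linarith
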